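/- Let ν ≥ 1 and let Λ₀ ⊆ Λ ⊆ (𝔽q[t])^ν be 𝔽q[t]-submodules, and suppose β₁, …, β_ν is a basis of Λ₀ as an 𝔽q[t]-module. Then Λ admits an 𝔽q[t]-basis γ₁, …, γ_ν such that for every 1 ≤ j ≤ ν one has deg_t(γ_j) ≤ max_{1 ≤ i ≤ j} deg_t(β_i). -/

import Mathlib

open Polynomial Submodule

namespace CasselsFqt

variable {Fq : Type*} [Field Fq] {ν : ℕ}

/-- Degree of a vector of polynomials. -/
def degv (v : Fin ν → Polynomial Fq) : ℕ := Finset.univ.sup fun c => (v c).natDegree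

lemma degv_le {v : Fin ν → Polynomial Fq} {d : ℕ} (h : ∀ c, (v c).natDegree ≤ d) :
    degv v ≤ d := Finset.sup_le fun c _ => h c

lemma natDegree_le_degv (v : Fin ν → Polynomial Fq) (c : Fin ν) : (v c).natDegree ≤ degv v := by
  exact Finset.le_sup (f := fun c => (v c).natDegree) (Finset.mem_univ c)

lemma le_degv_smul {f : Polynomial Fq} (hf : f ≠ 0) (v : Fin ν → Polynomial Fq)
    (hv : 1 ≤ degv v) : f.natDegree + degv v ≤ degv (f • v) := by
  have hne : (Finset.univ : Finset (Fin ν)).Nonempty := by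
    rcases (Finset.univ : Finset (Fin ν)).eq_empty_or_nonempty with h | h
    · exfalso
      have : degv v = 0 := by rw [degv, h]; simp
      omega
    · exact h
  obtain ⟨c, -, hc⟩ := Finset.exists_mem_eq_sup Finset.univ hne fun c => (v c).natDegree
  have hc' : degv v = (v c).natDegree := hc
  have hvc : v c ≠ 0 := by
    intro h0
    rw [hc', h0, natDegree_zero] at hv
    omega
  have hh : ((f • v) c).natDegree = f.natDegree + degv v := by
    rw [Pi.smul_apply, smul_eq_mul, natDegree_mul hf hvc, hc']
  rw [← hh]
  exact natDegree_le_degv _ _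

/-- Span of the first `k` of the `β`'s. -/
noncomputable def Sk (β : Fin ν → (Fin ν → Polynomial Fq)) (k : ℕ) :
    Submodule (Polynomial Fq) (Fin ν → Polynomial Fq) :=
  Submodule.span _ (β '' {i | (i : ℕ) < k})

/-- Saturation of `Sk`. -/
noncomputable def Tk (β : Fin ν → (Fin ν → Polynomial Fq)) (k : ℕ) :
    Submodule (Polynomial Fq) (Fin ν → Polynomial Fq) where
  carrier := {v | ∃ f : Polynomial Fq, f ≠ 0 ∧ f • v ∈ Sk β k}
  add_mem' := by
    rintro a b ⟨f, hf, hfa⟩ ⟨g, hg, hgb⟩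
    refine ⟨f * g, mul_ne_zero hf hg, ?_⟩
    rw [smul_add]
    have h1 : (f * g) • a = g • (f • a) := by rw [mul_comm, mul_smul]
    have h2 : (f * g) • b = f • (g • b) := mul_smul f g b
    rw [h1, h2]
    exact add_mem (Submodule.smul_mem _ _ hfa) (Submodule.smul_mem _ _ hgb)
  zero_mem' := ⟨1, one_ne_zero, by simpa using Submodule.zero_mem _⟩
  smul_mem' := by
    rintro r v ⟨f, hf, hfv⟩
    exact ⟨f, hf, by rw [smul_comm]; exact Submodule.smul_mem _ r hfv⟩

lemma mem_Tk {β : Fin ν → (Fin ν → Polynomial Fq)} {k : ℕ} {v : Fin ν → Polynomial Fq} :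
    v ∈ Tk β k ↔ ∃ f : Polynomial Fq, f ≠ 0 ∧ f • v ∈ Sk β k := Iff.rfl

lemma Tk_mono (β : Fin ν → (Fin ν → Polynomial Fq)) {k l : ℕ} (hkl : k ≤ l) :
    Tk β k ≤ Tk β l := by
  rintro v ⟨f, hf, hfv⟩
  exact ⟨f, hf, Submodule.span_mono
    (Set.image_mono fun i hi => lt_of_lt_of_le hi hkl) hfv⟩

lemma Tk_zero {β : Fin ν → (Fin ν → Polynomial Fq)} {v : Fin ν → Polynomial Fq} (hv : v ∈ Tk (ν := ν) (Fq := Fq) β 0) : v = 0 := by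
  obtain ⟨f, hf, hfv⟩ := hv
  have hS : Sk (ν := ν) (Fq := Fq) β 0 = ⊥ := by
    rw [Sk]
    have : {i : Fin ν | (i : ℕ) < 0} = ∅ := by ext i; simp
    rw [this, Set.image_empty, Submodule.span_empty]
  rw [hS, Submodule.mem_bot] at hfv
  funext c
  have : f * v c = 0 := congrFun hfv c
  rcases mul_eq_zero.mp this with h | h
  · exact absurd h hf
  · exact h

lemma Tk_top (β : Fin ν → (Fin ν → Polynomial Fq))
    (hβ : LinearIndependent (Polynomial Fq) β) : Tk β ν = ⊤ := by
  classical
  rw [eq_top_iff]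
  set B : Matrix (Fin ν) (Fin ν) (Polynomial Fq) := Matrix.of fun c i => β i c with hB
  have hmv : ∀ y : Fin ν → Polynomial Fq, B.mulVec y = ∑ i, y i • β i := by
    intro y
    funext c
    simp [Matrix.mulVec, dotProduct, Finset.sum_apply, hB, mul_comm]
  have hdet : B.det ≠ 0 := by
    intro h0
    obtain ⟨x, hx0, hBx⟩ := (Matrix.exists_mulVec_eq_zero_iff).mpr h0
    apply hx0
    have hz : ∑ i, x i • β i = 0 := by rw [← hmv x]; exact hBx
    have := Fintype.linearIndependent_iff.mp hβ x hz
    funext i; exact this i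
  intro v _
  refine ⟨B.det, hdet, ?_⟩
  have hdv : B.det • v = B.mulVec (B.adjugate.mulVec v) := by
    rw [Matrix.mulVec_mulVec, Matrix.mul_adjugate, Matrix.smul_mulVec, Matrix.one_mulVec]
  rw [hdv, hmv]
  exact Submodule.sum_mem _ fun i _ =>
    Submodule.smul_mem _ _ (Submodule.subset_span ⟨i, i.2, rfl⟩)

/-- `max_{i ≤ j} deg β_i`. -/
def Mdeg (β : Fin ν → (Fin ν → Polynomial Fq)) (j : ℕ) : ℕ :=
  (Finset.univ.filter fun i : Fin ν => (i : ℕ) ≤ j).sup fun i => degv (β i)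

lemma Mdeg_mono (β : Fin ν → (Fin ν → Polynomial Fq)) {a b : ℕ} (hab : a ≤ b) :
    Mdeg β a ≤ Mdeg β b := by
  refine Finset.sup_mono ?_
  intro i hi
  simp only [Finset.mem_filter, Finset.mem_univ, true_and] at hi ⊢
  omega

lemma degv_le_Mdeg (β : Fin ν → (Fin ν → Polynomial Fq)) {i : Fin ν} {j : ℕ}
    (h : (i : ℕ) ≤ j) : degv (β i) ≤ Mdeg β j := by
  exact Finset.le_sup (f := fun i => degv (β i)) (by simp [h])


set_option maxHeartbeats 2000000 in
lemma step (β : Fin ν → (Fin ν → Polynomial Fq))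
    (hβ : LinearIndependent (Polynomial Fq) β)
    (Λ : Submodule (Polynomial Fq) (Fin ν → Polynomial Fq))
    (hβΛ : ∀ i, β i ∈ Λ) {j : ℕ} (hj : j < ν)
    (N P : Submodule (Polynomial Fq) (Fin ν → Polynomial Fq))
    (hN : N = Λ ⊓ Tk β (j+1)) (hP : P = Λ ⊓ Tk β j)
    (γ : Module.Basis (Fin j) (Polynomial Fq) ↥P)
    (hγP : ∀ i : Fin j, degv ((γ i : ↥P) : Fin ν → Polynomial Fq) ≤ Mdeg β (j - 1 - i)) :
    ∃ δ : Module.Basis (Fin (j+1)) (Polynomial Fq) ↥N,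
      ∀ i : Fin (j+1),
        degv ((δ i : ↥N) : Fin ν → Polynomial Fq) ≤ Mdeg β (j - i) := by
  classical
  have hPN : P ≤ N := by rw [hN, hP]; exact inf_le_inf_left Λ (Tk_mono β (Nat.le_succ j))
  set jν : Fin ν := ⟨j, hj⟩ with hjν
  -- saturation of P inside N
  have hsat : ∀ (f : Polynomial Fq) (v : Fin ν → Polynomial Fq),
      f ≠ 0 → v ∈ N → f • v ∈ P → v ∈ P := by
    intro f v hf hvN hfvP
    rw [hN] at hvN
    rw [hP] at hfvP ⊢
    obtain ⟨hvΛ, -⟩ := Submodule.mem_inf.mp hvN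
    obtain ⟨-, hfvT⟩ := Submodule.mem_inf.mp hfvP
    obtain ⟨g, hg, hgfv⟩ := mem_Tk.mp hfvT
    refine Submodule.mem_inf.mpr ⟨hvΛ, mem_Tk.mpr ⟨g * f, mul_ne_zero hg hf, ?_⟩⟩
    rw [mul_smul]
    exact hgfv
  set pN : Submodule (Polynomial Fq) ↥N := P.comap N.subtype with hpNdef
  have mem_pN : ∀ x : ↥N, x ∈ pN ↔ (x : Fin ν → Polynomial Fq) ∈ P := fun x => Iff.rfl
  haveI : Module.Finite (Polynomial Fq) ↥N :=
    Module.Finite.iff_fg.mpr (IsNoetherian.noetherian N)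
  haveI : Module.Finite (Polynomial Fq) (↥N ⧸ pN) :=
    Module.Finite.of_surjective pN.mkQ (Submodule.Quotient.mk_surjective pN)
  haveI : NoZeroSMulDivisors (Polynomial Fq) (↥N ⧸ pN) := by
    refine ⟨fun {c x} hcx => ?_⟩
    by_cases hc : c = 0
    · exact Or.inl hc
    · right
      obtain ⟨u, rfl⟩ := Submodule.Quotient.mk_surjective pN x
      rw [← Submodule.Quotient.mk_smul, Submodule.Quotient.mk_eq_zero] at hcx
      rw [Submodule.Quotient.mk_eq_zero]
      have hcu : (c • (u : Fin ν → Polynomial Fq)) ∈ P := hcx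
      exact (mem_pN u).mpr (hsat c u hc u.2 hcu)
  haveI : Module.Free (Polynomial Fq) (↥N ⧸ pN) := Module.free_of_finite_type_torsion_free'
  have hβN : β jν ∈ N := by
    rw [hN]
    refine Submodule.mem_inf.mpr ⟨hβΛ jν, mem_Tk.mpr ⟨1, one_ne_zero, ?_⟩⟩
    rw [one_smul]
    exact Submodule.subset_span ⟨jν, by simp [hjν], rfl⟩
  have hβnotP : β jν ∉ P := by
    intro hmem
    rw [hP] at hmem
    obtain ⟨-, hT⟩ := Submodule.mem_inf.mp hmem
    obtain ⟨f, hf, hfb⟩ := mem_Tk.mp hT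
    refine hf (linearIndependent_iff_eq_zero_of_smul_mem_span.mp hβ jν f ?_)
    refine Submodule.span_mono (Set.image_mono ?_) hfb
    intro i hi
    refine ⟨Set.mem_univ i, ?_⟩
    intro he
    rw [Set.mem_singleton_iff] at he
    subst he
    simp only [Set.mem_setOf_eq, hjν] at hi
    omega
  haveI : Nontrivial (↥N ⧸ pN) := by
    refine nontrivial_of_ne (Submodule.Quotient.mk ⟨β jν, hβN⟩) 0 ?_
    rw [Ne, Submodule.Quotient.mk_eq_zero]
    exact fun h => hβnotP h
  -- pairwise dependence modulo P
  have hdep : ∀ u v : ↥N, (u : Fin ν → Polynomial Fq) ∉ P →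
      ∃ a c : Polynomial Fq, a ≠ 0 ∧
        a • (v : Fin ν → Polynomial Fq) - c • (u : Fin ν → Polynomial Fq) ∈ P := by
    intro u v huP
    have hu2' : (u : Fin ν → Polynomial Fq) ∈ Λ ⊓ Tk β (j+1) := le_of_eq hN u.2
    have hv2' : (v : Fin ν → Polynomial Fq) ∈ Λ ⊓ Tk β (j+1) := le_of_eq hN v.2
    obtain ⟨huΛ, hu2⟩ := Submodule.mem_inf.mp hu2'
    obtain ⟨f, hf, hfu⟩ := mem_Tk.mp hu2
    obtain ⟨hvΛ, hv2⟩ := Submodule.mem_inf.mp hv2'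
    obtain ⟨g, hg, hgv⟩ := mem_Tk.mp hv2
    rw [Sk, Finsupp.mem_span_image_iff_linearCombination] at hfu hgv
    obtain ⟨l, hl, hlt⟩ := hfu
    obtain ⟨m, hm, hmt⟩ := hgv
    have hl' := (Finsupp.mem_supported _ _).mp hl
    have hm' := (Finsupp.mem_supported _ _).mp hm
    have hlj : l jν ≠ 0 := by
      intro h0
      apply huP
      rw [hP]
      refine Submodule.mem_inf.mpr ⟨huΛ, mem_Tk.mpr ⟨f, hf, ?_⟩⟩
      rw [Sk, Finsupp.mem_span_image_iff_linearCombination]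
      refine ⟨l, ?_, hlt⟩
      rw [Finsupp.mem_supported]
      intro i hi
      rw [Finset.mem_coe, Finsupp.mem_support_iff] at hi
      have h1 : (i : ℕ) < j + 1 := hl' (Finsupp.mem_support_iff.mpr hi)
      have hij : (i : ℕ) ≠ j := by
        intro he
        apply hi
        have hieq : i = jν := Fin.ext (by rw [he, hjν])
        rw [hieq]
        exact h0
      show (i : ℕ) < j
      omega
    refine ⟨l jν * g, m jν * f, mul_ne_zero hlj hg, ?_⟩
    rw [hP]
    refine Submodule.mem_inf.mpr ⟨?_, mem_Tk.mpr ⟨1, one_ne_zero, ?_⟩⟩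
    · exact sub_mem (Submodule.smul_mem _ _ hvΛ) (Submodule.smul_mem _ _ huΛ)
    · rw [one_smul, Sk, Finsupp.mem_span_image_iff_linearCombination]
      refine ⟨l jν • m - m jν • l, ?_, ?_⟩
      · rw [Finsupp.mem_supported]
        intro i hi
        rw [Finset.mem_coe, Finsupp.mem_support_iff] at hi
        have hij : (i : ℕ) ≠ j := by
          intro he
          apply hi
          have hieq : i = jν := Fin.ext (by rw [he, hjν])
          rw [hieq]
          simp [mul_comm]
        have hlm : l i ≠ 0 ∨ m i ≠ 0 := by
          by_contra hno
          push_neg at hno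
          apply hi
          simp [hno.1, hno.2]
        have h1 : (i : ℕ) < j + 1 := by
          rcases hlm with h | h
          · exact hl' (Finsupp.mem_support_iff.mpr h)
          · exact hm' (Finsupp.mem_support_iff.mpr h)
        show (i : ℕ) < j
        omega
      · rw [map_sub, map_smul, map_smul, hlt, hmt, smul_smul, smul_smul]
  -- the quotient has a basis with a unique index
  set b := Module.Free.chooseBasis (Polynomial Fq) (↥N ⧸ pN) with hb
  have hsub : ∀ i i' : Module.Free.ChooseBasisIndex (Polynomial Fq) (↥N ⧸ pN), i = i' := by
    intro i i'
    by_contra hne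
    obtain ⟨u, hu⟩ := Submodule.Quotient.mk_surjective pN (b i)
    obtain ⟨v, hv⟩ := Submodule.Quotient.mk_surjective pN (b i')
    have huP : (u : Fin ν → Polynomial Fq) ∉ P := by
      intro h
      have hbz : b i = 0 := by rw [← hu, Submodule.Quotient.mk_eq_zero]; exact h
      exact b.ne_zero i hbz
    obtain ⟨a, c, ha, hmem⟩ := hdep u v huP
    have hzero : a • b i' - c • b i = 0 := by
      rw [← hu, ← hv, ← Submodule.Quotient.mk_smul, ← Submodule.Quotient.mk_smul,
        ← Submodule.Quotient.mk_sub, Submodule.Quotient.mk_eq_zero]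
      exact hmem
    apply ha
    have hrep := congrArg (fun q => b.repr q i') hzero
    simpa [Finsupp.single_apply, hne, Ne.symm hne] using hrep
  obtain ⟨i₀⟩ : Nonempty (Module.Free.ChooseBasisIndex (Polynomial Fq) (↥N ⧸ pN)) :=
    b.index_nonempty
  set g : ↥N ⧸ pN := b i₀ with hg
  have hrepr : ∀ x : ↥N ⧸ pN, x = b.repr x i₀ • g := by
    intro x
    conv_lhs => rw [← b.sum_repr x]
    rw [Fintype.sum_eq_single i₀ fun i hi => absurd (hsub i i₀) hi]
  obtain ⟨y₀, hy₀⟩ := Submodule.Quotient.mk_surjective pN g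
  set fq : Polynomial Fq := b.repr (Submodule.Quotient.mk ⟨β jν, hβN⟩) i₀ with hfqdef
  have hβg : (Submodule.Quotient.mk ⟨β jν, hβN⟩ : ↥N ⧸ pN) = fq • g := hrepr _
  have hfq0 : fq ≠ 0 := by
    intro h0
    have hz : (Submodule.Quotient.mk ⟨β jν, hβN⟩ : ↥N ⧸ pN) = 0 := by
      rw [hβg, h0, zero_smul]
    rw [Submodule.Quotient.mk_eq_zero] at hz
    exact hβnotP hz
  have hlamP : β jν - fq • (y₀ : Fin ν → Polynomial Fq) ∈ P := by
    have hz : (Submodule.Quotient.mk ((⟨β jν, hβN⟩ : ↥N) - fq • y₀) : ↥N ⧸ pN) = 0 := by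
      rw [Submodule.Quotient.mk_sub, Submodule.Quotient.mk_smul, hy₀, hβg, sub_self]
    rw [Submodule.Quotient.mk_eq_zero] at hz
    exact hz
  -- division with remainder to control degrees
  set ftil : Polynomial Fq := fq * Polynomial.C (fq.leadingCoeff)⁻¹ with hftil
  have hmon : ftil.Monic := monic_mul_leadingCoeff_inv hfq0
  set lam : ↥P := ⟨β jν - fq • (y₀ : Fin ν → Polynomial Fq), hlamP⟩ with hlam
  set r : Fin j →₀ Polynomial Fq := γ.repr lam with hr
  set s : Fin j → Polynomial Fq := fun i => (r i) %ₘ ftil with hs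
  set qq : Fin j → Polynomial Fq :=
    fun i => Polynomial.C (fq.leadingCoeff)⁻¹ * ((r i) /ₘ ftil) with hqq
  have hkey : ∀ i, r i = fq * qq i + s i := by
    intro i
    have hmd := Polynomial.modByMonic_add_div (r i) ftil
    conv_lhs => rw [← hmd]
    rw [hqq, hs, hftil]
    ring
  set μ : Fin ν → Polynomial Fq :=
    ∑ i, qq i • ((γ i : ↥P) : Fin ν → Polynomial Fq) with hμdef
  have hμP : μ ∈ P :=
    Submodule.sum_mem _ fun i _ => Submodule.smul_mem _ _ (SetLike.coe_mem _)
  set y : Fin ν → Polynomial Fq := (y₀ : Fin ν → Polynomial Fq) + μ with hydef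
  have hyN : y ∈ N := add_mem y₀.2 (hPN hμP)
  have hmky : (Submodule.Quotient.mk (⟨y, hyN⟩ : ↥N) : ↥N ⧸ pN) = g := by
    have hy2 : (⟨y, hyN⟩ : ↥N) = y₀ + ⟨μ, hPN hμP⟩ := by
      ext; simp [hydef]
    rw [hy2, Submodule.Quotient.mk_add, hy₀]
    have hμ0 : (Submodule.Quotient.mk (⟨μ, hPN hμP⟩ : ↥N) : ↥N ⧸ pN) = 0 :=
      (Submodule.Quotient.mk_eq_zero _).mpr hμP
    rw [hμ0, add_zero]
  have hlam_eq : (lam : Fin ν → Polynomial Fq)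
      = ∑ i, r i • ((γ i : ↥P) : Fin ν → Polynomial Fq) := by
    conv_lhs => rw [← Module.Basis.sum_repr γ lam]
    push_cast
    rfl
  have heq : β jν - fq • y = ∑ i, s i • ((γ i : ↥P) : Fin ν → Polynomial Fq) := by
    have h1 : β jν - fq • y = (lam : Fin ν → Polynomial Fq) - fq • μ := by
      rw [hydef, hlam, smul_add]
      show β jν - (fq • (y₀ : Fin ν → Polynomial Fq) + fq • μ)
        = β jν - fq • (y₀ : Fin ν → Polynomial Fq) - fq • μ
      abel
    rw [h1, hlam_eq, hμdef, Finset.smul_sum, ← Finset.sum_sub_distrib]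
    refine Finset.sum_congr rfl fun i _ => ?_
    rw [smul_smul, ← sub_smul]
    congr 1
    rw [hkey i]
    ring
  -- degree bounds
  have hdegs : ∀ i : Fin j, (s i).natDegree ≤ fq.natDegree - 1 := by
    intro i
    by_cases h0 : s i = 0
    · simp [h0]
    · have hlt : (s i).degree < ftil.degree := Polynomial.degree_modByMonic_lt _ hmon
      have hnd := Polynomial.natDegree_lt_natDegree h0 hlt
      have hft : ftil.natDegree = fq.natDegree :=
        natDegree_mul_C (inv_ne_zero (leadingCoeff_ne_zero.mpr hfq0))
      omega
  have hdegfy : degv (fq • y) ≤ max (Mdeg β j) (fq.natDegree - 1 + Mdeg β j) := by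
    have hfy : fq • y = β jν - ∑ i, s i • ((γ i : ↥P) : Fin ν → Polynomial Fq) := by
      rw [← heq]; abel
    rw [hfy]
    refine degv_le fun c => ?_
    rw [Pi.sub_apply]
    refine (Polynomial.natDegree_sub_le _ _).trans (max_le_max ?_ ?_)
    · exact (natDegree_le_degv _ c).trans (degv_le_Mdeg β (by simp [hjν]))
    · rw [Finset.sum_apply]
      refine Polynomial.natDegree_sum_le_of_forall_le _ _ fun i _ => ?_
      rw [Pi.smul_apply, smul_eq_mul]
      refine (Polynomial.natDegree_mul_le).trans ?_
      have h2 : (((γ i : ↥P) : Fin ν → Polynomial Fq) c).natDegree ≤ Mdeg β j :=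
        (natDegree_le_degv _ c).trans ((hγP i).trans
          (Mdeg_mono β (show j - 1 - (i : ℕ) ≤ j by omega)))
      have h3 := hdegs i
      omega
  have hdy : degv y ≤ Mdeg β j := by
    by_cases h1 : degv y = 0
    · omega
    · have hlow := le_degv_smul hfq0 y (by omega)
      have hc := hlow.trans hdegfy
      rcases max_cases (Mdeg β j) (fq.natDegree - 1 + Mdeg β j) with ⟨hm, -⟩ | ⟨hm, -⟩ <;>
        rw [hm] at hc <;> omega
  -- build the extended basis
  have hli : ∀ (c : Polynomial Fq), ∀ x ∈ P, c • y + x = 0 → c = 0 := by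
    intro c x hx hcx
    have hcy : c • y ∈ P := by
      have hxy : c • y = -x := eq_neg_of_add_eq_zero_left hcx
      rw [hxy]
      exact neg_mem hx
    have hcg : c • g = 0 := by
      rw [← hmky, ← Submodule.Quotient.mk_smul, Submodule.Quotient.mk_eq_zero]
      exact hcy
    rcases smul_eq_zero.mp hcg with h | h
    · exact h
    · exact absurd h (b.ne_zero i₀)
  have hsp : ∀ z ∈ N, ∃ c : Polynomial Fq, z + c • y ∈ P := by
    intro z hz
    refine ⟨-(b.repr (Submodule.Quotient.mk ⟨z, hz⟩) i₀), ?_⟩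
    set d : Polynomial Fq := b.repr (Submodule.Quotient.mk ⟨z, hz⟩) i₀ with hd
    have hmk : (Submodule.Quotient.mk ((⟨z, hz⟩ : ↥N) - d • ⟨y, hyN⟩) : ↥N ⧸ pN) = 0 := by
      rw [Submodule.Quotient.mk_sub, Submodule.Quotient.mk_smul, hmky, hd, ← hrepr, sub_self]
    rw [Submodule.Quotient.mk_eq_zero] at hmk
    have hmem : z - d • y ∈ P := hmk
    have hzz : z + (-d) • y = z - d • y := by rw [neg_smul, sub_eq_add_neg]
    rw [hzz]
    exact hmem
  refine ⟨Module.Basis.mkFinConsOfLE y hyN γ hPN hli hsp, ?_⟩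
  intro i
  have hcoe : ((Module.Basis.mkFinConsOfLE y hyN γ hPN hli hsp : Fin (j+1) → ↥N))
      = Fin.cons ⟨y, hyN⟩ (Submodule.inclusion hPN ∘ γ) :=
    Module.Basis.coe_mkFinConsOfLE y hyN γ hPN hli hsp
  refine Fin.cases ?_ ?_ i
  · have h0 : ((Module.Basis.mkFinConsOfLE y hyN γ hPN hli hsp 0 : ↥N) : Fin ν → Polynomial Fq) = y := by
      rw [congrFun hcoe 0]
      simp
    rw [h0]
    simpa using hdy
  · intro i'
    have h1 : ((Module.Basis.mkFinConsOfLE y hyN γ hPN hli hsp i'.succ : ↥N) : Fin ν → Polynomial Fq)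
        = ((γ i' : ↥P) : Fin ν → Polynomial Fq) := by
      rw [congrFun hcoe i'.succ]
      simp
    rw [h1]
    have harg : j - ((i'.succ : Fin (j+1)) : ℕ) = j - 1 - (i' : ℕ) := by
      simp only [Fin.val_succ]
      omega
    rw [harg]
    exact hγP i'

lemma exists_flag_basis (β : Fin ν → (Fin ν → Polynomial Fq))
    (hβ : LinearIndependent (Polynomial Fq) β)
    (Λ : Submodule (Polynomial Fq) (Fin ν → Polynomial Fq)) (hβΛ : ∀ i, β i ∈ Λ) :
    ∀ k, k ≤ ν → ∃ γ : Module.Basis (Fin k) (Polynomial Fq) ↥(Λ ⊓ Tk β k),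
      ∀ i : Fin k, degv ((γ i : ↥(Λ ⊓ Tk β k)) : Fin ν → Polynomial Fq)
        ≤ Mdeg β (k - 1 - i) := by
  intro k
  induction k with
  | zero =>
    intro _
    haveI : Subsingleton ↥(Λ ⊓ Tk β 0) := by
      constructor
      intro x y
      apply Subtype.ext
      have hx : (x : Fin ν → Polynomial Fq) = 0 := Tk_zero (Submodule.mem_inf.mp x.2).2
      have hy : (y : Fin ν → Polynomial Fq) = 0 := Tk_zero (Submodule.mem_inf.mp y.2).2
      rw [hx, hy]
    exact ⟨Module.Basis.empty _, fun i => i.elim0⟩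
  | succ k ih =>
    intro hk
    obtain ⟨γ, hγ⟩ := ih (Nat.le_of_succ_le hk)
    obtain ⟨δ, hδ⟩ := step β hβ Λ hβΛ (Nat.lt_of_succ_le hk) _ _ rfl rfl γ hγ
    refine ⟨δ, fun i => ?_⟩
    have hδi := hδ i
    have harg : k + 1 - 1 - (i : ℕ) = k - (i : ℕ) := by omega
    rw [harg]
    exact hδi

end CasselsFqt

open CasselsFqt in
/-- Lemma 2.8 of the paper (an `𝔽q[t]`-analogue of a lemma of Cassels).
Given `𝔽q[t]`-submodules `Λ₀ ⊆ Λ ⊆ (𝔽q[t])^ν` and a basis `β₁, …, β_ν` of `Λ₀`,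
the module `Λ` admits a basis `γ₁, …, γ_ν` with
`deg_t(γ_j) ≤ max_{i ≤ j} deg_t(β_i)` for every `j`, where the degree of a
vector is the maximum of the degrees of its entries. -/
theorem lattice_basis_bounded_degree
    (Fq : Type*) [Field Fq] [Fintype Fq]
    (ν : ℕ) (hν : 0 < ν)
    (Λ₀ Λ : Submodule (Polynomial Fq) (Fin ν → Polynomial Fq))
    (hsub : Λ₀ ≤ Λ)
    (β : Module.Basis (Fin ν) (Polynomial Fq) Λ₀) :
    ∃ γ : Module.Basis (Fin ν) (Polynomial Fq) Λ,
      ∀ j : Fin ν,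
        (Finset.univ.sup fun c : Fin ν => (((γ j : Fin ν → Polynomial Fq)) c).natDegree) ≤
          (Finset.Iic j).sup
            (fun i => Finset.univ.sup fun c : Fin ν =>
              (((β i : Fin ν → Polynomial Fq)) c).natDegree) := by
  classical
  set β' : Fin ν → (Fin ν → Polynomial Fq) := fun i => (β i : Fin ν → Polynomial Fq) with hβ'def
  have hβ' : LinearIndependent (Polynomial Fq) β' :=
    β.linearIndependent.map' Λ₀.subtype Λ₀.ker_subtype
  have hβΛ : ∀ i, β' i ∈ Λ := fun i => hsub (β i).2
  obtain ⟨γ₀, hγ₀⟩ := exists_flag_basis β' hβ' Λ hβΛ ν le_rfl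
  have htop : Λ ⊓ Tk β' ν = Λ := by rw [Tk_top β' hβ', inf_top_eq]
  let γ₁ : Module.Basis (Fin ν) (Polynomial Fq) ↥Λ :=
    (γ₀.map (LinearEquiv.ofEq _ _ htop)).reindex Fin.revPerm
  refine ⟨γ₁, fun j => ?_⟩
  have hcoe : ((γ₁ j : ↥Λ) : Fin ν → Polynomial Fq)
      = ((γ₀ (Fin.rev j) : ↥(Λ ⊓ Tk β' ν)) : Fin ν → Polynomial Fq) := by
    show (((γ₀.map (LinearEquiv.ofEq _ _ htop)).reindex Fin.revPerm j : ↥Λ) :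
      Fin ν → Polynomial Fq) = _
    rw [Module.Basis.reindex_apply, Module.Basis.map_apply, Fin.revPerm_symm]
    rw [LinearEquiv.coe_ofEq_apply]
    rfl
  have hb := hγ₀ (Fin.rev j)
  have hrev : (Fin.rev j : ℕ) = ν - 1 - (j : ℕ) := by
    rw [Fin.val_rev]; omega
  have harg : ν - 1 - ((Fin.rev j : Fin ν) : ℕ) = (j : ℕ) := by
    have := j.isLt
    omega
  rw [hrev] at harg
  have hbound : degv ((γ₁ j : ↥Λ) : Fin ν → Polynomial Fq) ≤ Mdeg β' (j : ℕ) := by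
    rw [hcoe]
    calc degv ((γ₀ (Fin.rev j) : ↥(Λ ⊓ Tk β' ν)) : Fin ν → Polynomial Fq)
        ≤ Mdeg β' (ν - 1 - (Fin.rev j : ℕ)) := hb
      _ = Mdeg β' (j : ℕ) := by rw [hrev] at hb ⊢; rw [harg]
  refine le_trans hbound ?_
  rw [Mdeg]
  refine Finset.sup_le fun i hi => ?_
  simp only [Finset.mem_filter, Finset.mem_univ, true_and] at hi
  have hmem : i ∈ Finset.Iic j := Finset.mem_Iic.mpr (Fin.le_def.mpr hi)
  exact Finset.le_sup (f := fun i => Finset.univ.sup fun c : Fin ν =>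
    (((β i : Fin ν → Polynomial Fq)) c).natDegree) hmem
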